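/- (The limiting rank is uniformly distributed.) Let f be a probability density on ℝ^d such that for every c ≥ 0 the level set { z : f(z) = c } has Lebesgue measure zero, and let μ be the probability measure with density f. Define p(x) = μ{ z : f(z) ≤ f(x) } = ∫_{{z : f(z) ≤ f(x)}} f(z) dz. Then the pushforward of μ under the map x ↦ p(x) is the uniform (Lebesgue) probability measure on the interval [0,1]; equivalently, if X is a random vector with density f, then p(X) is uniformly distributed on [0,1], regardless of the underlying density f. -/

import Mathlib

open MeasureTheory
open scoped ENNReal

/-- The limiting rank `p(x) = ∫_{{z : f(z) ≤ f(x)}} f(z) dz`. -/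
noncomputable def limitRank {d : ℕ} (f : EuclideanSpace ℝ (Fin d) → ℝ)
    (x : EuclideanSpace ℝ (Fin d)) : ℝ :=
  ∫ z in {z | f z ≤ f x}, f z

/-- The limiting rank is uniformly distributed: if every level set of the
density `f` is Lebesgue-null, then the pushforward of the measure `μ` with density `f` under
`x ↦ p(x)` is the uniform probability measure on `[0,1]`. -/
theorem limitRank_uniformly_distributed
    (d : ℕ) (f : EuclideanSpace ℝ (Fin d) → ℝ)
    (hf_meas : Measurable f) (hf_nonneg : ∀ x, 0 ≤ f x)
    (hf_prob : ∫⁻ x, ENNReal.ofReal (f x) = 1)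
    (hf_levels : ∀ c : ℝ, 0 ≤ c → volume {z | f z = c} = 0) :
    Measure.map (limitRank f) (volume.withDensity fun x => ENNReal.ofReal (f x)) =
      volume.restrict (Set.Icc (0 : ℝ) 1) := by
  set μ : Measure (EuclideanSpace ℝ (Fin d)) :=
    volume.withDensity fun x => ENNReal.ofReal (f x) with hμ
  have hμac : μ ≪ (volume : Measure (EuclideanSpace ℝ (Fin d))) :=
    withDensity_absolutelyContinuous _ _
  haveI hμprob : IsProbabilityMeasure μ := by
    constructor
    rw [hμ, withDensity_apply _ MeasurableSet.univ, Measure.restrict_univ]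
    exact hf_prob
  set ν : Measure ℝ := Measure.map f μ with hν
  haveI hνprob : IsProbabilityMeasure ν :=
    Measure.isProbabilityMeasure_map hf_meas.aemeasurable
  set F : StieltjesFunction ℝ := ProbabilityTheory.cdf ν with hF
  -- the limit rank is F ∘ f
  have hμs : ∀ t : ℝ, μ {z | f z ≤ t} = ν (Set.Iic t) := by
    intro t
    rw [hν, Measure.map_apply hf_meas measurableSet_Iic]
    rfl
  have hp : ∀ x, limitRank f x = F (f x) := by
    intro x
    have hsm : MeasurableSet {z | f z ≤ f x} := hf_meas measurableSet_Iic
    rw [limitRank, integral_eq_lintegral_of_nonneg_ae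
        (Filter.Eventually.of_forall fun z => hf_nonneg z)
        (hf_meas.aestronglyMeasurable.restrict),
      ProbabilityTheory.cdf_eq_real, measureReal_def, ← hμs (f x), hμ, withDensity_apply _ hsm]
  -- ν has no atoms
  have hatom : ∀ a : ℝ, ν {a} = 0 := by
    intro a
    rw [hν, Measure.map_apply hf_meas (measurableSet_singleton a)]
    rcases le_or_gt 0 a with ha | ha
    · exact hμac (hf_levels a ha)
    · have : f ⁻¹' {a} = ∅ := by
        ext z
        simp only [Set.mem_preimage, Set.mem_singleton_iff, Set.mem_empty_iff_false, iff_false]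
        intro h
        exact absurd (h ▸ hf_nonneg z) (not_le.mpr ha)
      rw [this, measure_empty]
  -- F is continuous
  have hFcont : Continuous (F : ℝ → ℝ) := by
    rw [continuous_iff_continuousAt]
    intro a
    have hsing := hatom a
    rw [← ProbabilityTheory.measure_cdf ν, StieltjesFunction.measure_singleton,
      ENNReal.ofReal_eq_zero, sub_nonpos] at hsing
    have hll : Function.leftLim (F : ℝ → ℝ) a = F a :=
      le_antisymm (F.mono.leftLim_le le_rfl) hsing
    refine continuousAt_iff_continuous_left'_right'.2 ⟨?_, ?_⟩
    · have := F.mono.tendsto_leftLim a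
      rwa [hll] at this
    · exact (F.right_continuous a).mono Set.Ioi_subset_Ici_self
  -- F 0 = 0
  have hF0 : F 0 = 0 := by
    have h0 : {z | f z ≤ (0:ℝ)} = {z | f z = 0} := by
      ext z; exact ⟨fun h => le_antisymm h (hf_nonneg z), fun h => le_of_eq h⟩
    have : ν (Set.Iic (0:ℝ)) = 0 := by
      rw [← hμs 0, h0]; exact hμac (hf_levels 0 le_rfl)
    rw [hF, ProbabilityTheory.cdf_eq_real, measureReal_def, this, ENNReal.toReal_zero]
  -- measurability of the limit rank
  have hpm : Measurable (limitRank f) := by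
    have : limitRank f = fun x => F (f x) := funext hp
    rw [this]
    exact (F.mono.measurable).comp hf_meas
  -- main computation of the CDF of the pushforward
  refine Measure.ext_of_Iic _ _ fun u => ?_
  rw [Measure.map_apply hpm measurableSet_Iic,
    Measure.restrict_apply measurableSet_Iic]
  have hpre : limitRank f ⁻¹' Set.Iic u = f ⁻¹' {t | F t ≤ u} := by
    ext x; simp [hp x]
  have hmap : μ (limitRank f ⁻¹' Set.Iic u) = ν {t | F t ≤ u} := by
    rw [hpre, hν, Measure.map_apply hf_meas]
    exact measurableSet_le F.mono.measurable measurable_const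
  rcases lt_or_ge u 0 with hu | hu
  · -- u < 0 : both sides are zero
    have h1 : limitRank f ⁻¹' Set.Iic u = ∅ := by
      ext x
      simp only [Set.mem_preimage, Set.mem_Iic, Set.mem_empty_iff_false, iff_false, not_le, hp x]
      exact lt_of_lt_of_le hu (ProbabilityTheory.cdf_nonneg ν (f x))
    have h2 : Set.Iic u ∩ Set.Icc (0:ℝ) 1 = ∅ := by
      ext t
      simp only [Set.mem_inter_iff, Set.mem_Iic, Set.mem_Icc, Set.mem_empty_iff_false, iff_false,
        not_and]
      intro h h0 h1
      linarith
    rw [h1, h2, measure_empty, measure_empty]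
  rcases lt_or_ge u 1 with hu1 | hu1
  · -- 0 ≤ u < 1
    -- find T with u < F T
    obtain ⟨T, hT⟩ : ∃ T : ℝ, u < F T :=
      ((ProbabilityTheory.tendsto_cdf_atTop ν).eventually (eventually_gt_nhds hu1)).exists
    set s : Set ℝ := {t | F t ≤ u} with hs
    have hs_closed : IsClosed s := isClosed_Iic.preimage hFcont
    have hs_ne : (0:ℝ) ∈ s := by simpa [hs, hF0] using hu
    have hs_ub : ∀ t ∈ s, t ≤ T := by
      intro t ht
      by_contra h
      push_neg at h
      exact absurd (le_trans (F.mono h.le) ht) (not_le.mpr hT)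
    have hs_bdd : BddAbove s := ⟨T, hs_ub⟩
    set a : ℝ := sSup s with ha
    have ha_mem : a ∈ s := hs_closed.csSup_mem ⟨0, hs_ne⟩ hs_bdd
    have haT : a ≤ T := hs_ub a ha_mem
    -- F a = u via IVT
    have hFa : F a = u := by
      obtain ⟨t, ht_mem, htF⟩ :=
        intermediate_value_Icc haT hFcont.continuousOn ⟨ha_mem, hT.le⟩
      have hts : t ∈ s := le_of_eq htF
      have hta : t = a := le_antisymm (le_csSup hs_bdd hts) ht_mem.1
      rw [← hta]
      exact htF
    have hset : s = Set.Iic a := by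
      ext t
      constructor
      · intro ht; exact le_csSup hs_bdd ht
      · intro ht; exact le_trans (F.mono ht) ha_mem
    have h2 : Set.Iic u ∩ Set.Icc (0:ℝ) 1 = Set.Icc 0 u := by
      ext t
      simp only [Set.mem_inter_iff, Set.mem_Iic, Set.mem_Icc]
      constructor
      · rintro ⟨h1, h2, h3⟩; exact ⟨h2, h1⟩
      · rintro ⟨h1, h2⟩; exact ⟨h2, h1, le_trans h2 hu1.le⟩
    rw [hmap, hset, ← ProbabilityTheory.ofReal_cdf, ← hF, hFa, h2, Real.volume_Icc, sub_zero]
  · -- u ≥ 1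
    have h1 : limitRank f ⁻¹' Set.Iic u = Set.univ := by
      ext x
      simp only [Set.mem_preimage, Set.mem_Iic, Set.mem_univ, iff_true, hp x]
      exact le_trans (ProbabilityTheory.cdf_le_one ν (f x)) hu1
    have h2 : Set.Iic u ∩ Set.Icc (0:ℝ) 1 = Set.Icc 0 1 := by
      ext t
      simp only [Set.mem_inter_iff, Set.mem_Iic, Set.mem_Icc]
      exact ⟨fun h => h.2, fun h => ⟨le_trans h.2 hu1, h⟩⟩
    rw [h1, h2, measure_univ, Real.volume_Icc]
    norm_num
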